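/- Let λ be an L-dominant weight (⟨λ, α^∨⟩ ≥ 0 for all simple roots α ≠ α_k) such that λ + ρ is regular, and let w ∈ W be the unique Weyl group element with w(λ + ρ) strictly dominant. Then the set of positive roots inverted by w is exactly {α ∈ N^+ : ⟨λ + ρ, α^∨⟩ < 0}, where N^+ is the set of positive roots whose simple-root decomposition involves α_k. -/

import Mathlib

/-- The pairing `⟨λ, α^∨⟩ = 2(λ,α)/(α,α)` of a weight with a coroot. -/
noncomputable def pairing {E : Type*} [NormedAddCommGroup E] [InnerProductSpace ℝ E]
    (lam α : E) : ℝ :=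
  2 * (inner ℝ lam α : ℝ) / (inner ℝ α α : ℝ)

/-- Let `λ` be an `L`-dominant weight such that `λ + ρ` is regular, and let `w` be the unique
Weyl group element such that `w(λ + ρ)` is strictly dominant.  Then the inversion set of `w`
is exactly `{α ∈ N⁺ | ⟨λ + ρ, α^∨⟩ < 0}`, where `N⁺` is the set of positive roots whose
simple-root decomposition involves `α_k`. -/
theorem stmt4 {E : Type*} [NormedAddCommGroup E] [InnerProductSpace ℝ E]
    (Φpos Δ : Finset E) (hΔΦ : Δ ⊆ Φpos)
    (αk : E) (hαk : αk ∈ Δ)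
    -- decomposition of positive roots in the simple roots, with nonnegative coefficients
    (coeff : E → E → ℝ)
    (hcoeff : ∀ α ∈ Φpos, (∀ β, 0 ≤ coeff α β) ∧ α = ∑ β ∈ Δ, coeff α β • β)
    -- roots are nonzero, and no root is both positive and negative
    (hroot : ∀ α ∈ Φpos, α ≠ 0)
    (hdisj : ∀ α ∈ Φpos, -α ∉ Φpos)
    -- ρ is the sum of the fundamental weights
    (ρ : E) (hρ : ∀ α ∈ Δ, pairing ρ α = 1)
    -- λ is L-dominant and λ + ρ is regular
    (lam : E) (hlam : ∀ α ∈ Δ, α ≠ αk → 0 ≤ pairing lam α)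
    (hregular : ∀ α : E, (α ∈ Φpos ∨ -α ∈ Φpos) → pairing (lam + ρ) α ≠ 0)
    -- the simple reflections, and the Weyl group element `w`
    (σ : E → (E ≃ₗ[ℝ] E))
    (hσ : ∀ α ∈ Δ, ∀ x : E, σ α x = x - pairing x α • α)
    (w : E ≃ₗ[ℝ] E)
    (hw : w ∈ Subgroup.closure {u : E ≃ₗ[ℝ] E | ∃ α ∈ Δ, u = σ α})
    (hstab : ∀ u ∈ Subgroup.closure {u : E ≃ₗ[ℝ] E | ∃ α ∈ Δ, u = σ α},
      ∀ α : E, (α ∈ Φpos ∨ -α ∈ Φpos) → (u α ∈ Φpos ∨ -(u α) ∈ Φpos))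
    -- `w(λ + ρ)` is strictly dominant
    (hwdom : ∀ α ∈ Δ, 0 < pairing (w (lam + ρ)) α) :
    {α : E | α ∈ Φpos ∧ -(w α) ∈ Φpos} =
      {α : E | α ∈ Φpos ∧ coeff α αk ≠ 0 ∧ pairing (lam + ρ) α < 0} := by
  classical
  have hpos : ∀ γ ∈ Φpos, (0:ℝ) < (inner ℝ γ γ : ℝ) := fun γ hγ =>
    lt_of_le_of_ne real_inner_self_nonneg (Ne.symm (inner_self_ne_zero.mpr (hroot γ hγ)))
  -- every element of the Weyl group preserves the inner product
  have hiso : ∀ u ∈ Subgroup.closure {u : E ≃ₗ[ℝ] E | ∃ α ∈ Δ, u = σ α},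
      ∀ x y : E, (inner ℝ (u x) (u y) : ℝ) = (inner ℝ x y : ℝ) := by
    intro u hu
    induction hu using Subgroup.closure_induction with
    | mem g hg =>
      obtain ⟨a, ha, rfl⟩ := hg
      intro x y
      have haa : (0:ℝ) < (inner ℝ a a : ℝ) := hpos a (hΔΦ ha)
      rw [hσ a ha x, hσ a ha y]
      unfold pairing
      simp only [inner_sub_left, inner_sub_right, real_inner_smul_left,
        real_inner_smul_right]
      rw [real_inner_comm a x, real_inner_comm a y]
      field_simp
      ring
    | one => intro x y; simp
    | mul g h hg hh ihg ihh =>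
      intro x y
      have : (g * h) x = g (h x) := rfl
      rw [this, show (g * h) y = g (h y) from rfl, ihg, ihh]
    | inv g hg ihg =>
      intro x y
      have h1 : g (g⁻¹ x) = x := g.apply_symm_apply x
      have h2 : g (g⁻¹ y) = y := g.apply_symm_apply y
      have := ihg (g⁻¹ x) (g⁻¹ y)
      rw [h1, h2] at this
      exact this.symm
  have hwinner : ∀ x y : E, (inner ℝ (w x) (w y) : ℝ) = (inner ℝ x y : ℝ) := hiso w hw
  -- strict positivity of inner with simple roots
  have hWβ : ∀ β ∈ Δ, (0:ℝ) < (inner ℝ (w (lam + ρ)) β : ℝ) := by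
    intro β hβ
    have h1 := hwdom β hβ
    have hb := hpos β (hΔΦ hβ)
    unfold pairing at h1
    nlinarith [mul_pos h1 hb, div_mul_cancel₀ (2 * (inner ℝ (w (lam + ρ)) β : ℝ))
      (ne_of_gt hb)]
  -- nonnegativity of inner of w(λ+ρ) with any positive root
  have hWnn : ∀ γ ∈ Φpos, (0:ℝ) ≤ (inner ℝ (w (lam + ρ)) γ : ℝ) := by
    intro γ hγ
    obtain ⟨hc, hsum⟩ := hcoeff γ hγ
    rw [hsum, inner_sum]
    apply Finset.sum_nonneg
    intro β hβ
    rw [real_inner_smul_right]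
    exact mul_nonneg (hc β) (le_of_lt (hWβ β hβ))
  ext α
  simp only [Set.mem_setOf_eq]
  constructor
  · rintro ⟨hα, hneg⟩
    refine ⟨hα, ?_, ?_⟩
    · -- coeff α αk ≠ 0
      intro hc0
      -- then ⟨λ+ρ, α⟩ ≥ 0
      obtain ⟨hc, hsum⟩ := hcoeff α hα
      have hnn : (0:ℝ) ≤ (inner ℝ (lam + ρ) α : ℝ) := by
        rw [hsum, inner_sum]
        apply Finset.sum_nonneg
        intro β hβ
        rw [real_inner_smul_right]
        by_cases hβk : β = αk
        · subst hβk; rw [hc0]; simp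
        · apply mul_nonneg (hc β)
          have hb := hpos β (hΔΦ hβ)
          have hlβ := hlam β hβ hβk
          have hrβ := hρ β hβ
          unfold pairing at hlβ hrβ
          have : (0:ℝ) ≤ 2 * (inner ℝ lam β : ℝ) / (inner ℝ β β : ℝ) +
              2 * (inner ℝ ρ β : ℝ) / (inner ℝ β β : ℝ) := by linarith
          rw [← add_div, div_nonneg_iff] at this
          have h2 : (0:ℝ) ≤ 2 * (inner ℝ lam β : ℝ) + 2 * (inner ℝ ρ β : ℝ) := by
            rcases this with ⟨h, _⟩ | ⟨_, h⟩
            · exact h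
            · linarith
          rw [inner_add_left]
          linarith
      -- but w sends α to a negative root, so ⟨λ+ρ, α⟩ < 0
      have h1 : (0:ℝ) ≤ (inner ℝ (w (lam + ρ)) (-(w α)) : ℝ) := hWnn _ hneg
      rw [inner_neg_right, hwinner] at h1
      have hne := hregular α (Or.inl hα)
      unfold pairing at hne
      have hbα := hpos α hα
      have : (inner ℝ (lam + ρ) α : ℝ) = 0 := le_antisymm (by linarith) hnn
      rw [this] at hne
      simp at hne
    · -- pairing (lam+ρ) α < 0
      have h1 : (0:ℝ) ≤ (inner ℝ (w (lam + ρ)) (-(w α)) : ℝ) := hWnn _ hneg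
      rw [inner_neg_right, hwinner] at h1
      have hne := hregular α (Or.inl hα)
      unfold pairing at hne ⊢
      have hbα := hpos α hα
      have hlt : (inner ℝ (lam + ρ) α : ℝ) < 0 := by
        rcases lt_or_eq_of_le (by linarith : (inner ℝ (lam + ρ) α : ℝ) ≤ 0) with h | h
        · exact h
        · rw [h] at hne; simp at hne
      exact div_neg_of_neg_of_pos (by linarith) hbα
  · rintro ⟨hα, _, hlt⟩
    refine ⟨hα, ?_⟩
    have hbα := hpos α hα
    unfold pairing at hlt
    have hIlt : (inner ℝ (lam + ρ) α : ℝ) < 0 := by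
      rcases lt_trichotomy (inner ℝ (lam + ρ) α : ℝ) 0 with h | h | h
      · exact h
      · rw [h] at hlt; simp at hlt
      · exfalso
        have : (0:ℝ) < 2 * (inner ℝ (lam + ρ) α : ℝ) / (inner ℝ α α : ℝ) :=
          div_pos (by linarith) hbα
        linarith
    rcases hstab w hw α (Or.inl hα) with h | h
    · exfalso
      have := hWnn _ h
      rw [hwinner] at this
      linarith
    · exact h
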